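/- Let λ, μ be partitions of n with λ > μ in dominance order, let i be the least index with λ_i > μ_i and j > i the least index with equal partial sums λ₁+...+λ_j = μ₁+...+μ_j. Then the sequence ν obtained from μ by increasing μ_i by 1 and decreasing μ_j by 1 is again a partition of n, and λ ≥ ν > μ. -/

import Mathlib

/-- The parts of a partition sorted in weakly decreasing order. -/
def partsList {n : ℕ} (p : Nat.Partition n) : List ℕ := p.parts.sort (· ≥ ·)

/-- The `i`-th part (1-indexed) of a partition, with the convention that
`part p i = 0` for `i` beyond the length. -/
def part {n : ℕ} (p : Nat.Partition n) (i : ℕ) : ℕ := (partsList p).getD (i - 1) 0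

/-- The partial sum `λ₁ + ⋯ + λ_j`. -/
def psum {n : ℕ} (p : Nat.Partition n) (j : ℕ) : ℕ := ∑ i ∈ Finset.range j, part p (i + 1)

/-- Dominance ordering: `Dominates l m` means `l ≥ m`, i.e. every partial sum of `l`
is at least the corresponding partial sum of `m`. -/
def Dominates {n : ℕ} (l m : Nat.Partition n) : Prop := ∀ j, psum m j ≤ psum l j

/-- Strict dominance: `l > m`. -/
def SDom {n : ℕ} (l m : Nat.Partition n) : Prop := Dominates l m ∧ l ≠ m

/-- The number of (nonzero) parts of a partition. -/
def plen {n : ℕ} (p : Nat.Partition n) : ℕ := Multiset.card p.parts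

/-- `l` covers `m` in the dominance order: `l > m` and nothing strictly in between. -/
def Covers {n : ℕ} (l m : Nat.Partition n) : Prop :=
  SDom l m ∧ ¬ ∃ ν : Nat.Partition n, SDom l ν ∧ SDom ν m

section Helpers

variable {n : ℕ} (p : Nat.Partition n)

lemma partsList_sorted : (partsList p).Pairwise (· ≥ ·) := Multiset.pairwise_sort _ _

lemma partsList_coe : ((partsList p : List ℕ) : Multiset ℕ) = p.parts :=
  Multiset.sort_eq _ _

lemma partsList_sum : (partsList p).sum = n := by
  have h := congrArg Multiset.sum (partsList_coe p)
  rw [Multiset.sum_coe, p.parts_sum] at h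
  exact h

lemma partsList_pos {x : ℕ} (hx : x ∈ partsList p) : 0 < x := by
  apply p.parts_pos
  rw [← partsList_coe p]
  exact_mod_cast hx

lemma part_le_part {a b : ℕ} (ha : 1 ≤ a) (hab : a ≤ b) : part p b ≤ part p a := by
  unfold part
  by_cases hb : b - 1 < (partsList p).length
  · have ha' : a - 1 < (partsList p).length := by omega
    rw [List.getD_eq_getElem _ _ hb, List.getD_eq_getElem _ _ ha']
    rcases eq_or_lt_of_le (show a - 1 ≤ b - 1 by omega) with h | h
    · exact le_of_eq (by congr 1; omega)
    · exact List.pairwise_iff_getElem.mp (partsList_sorted p) _ _ ha' hb h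
  · rw [List.getD_eq_default _ _ (by omega)]
    exact Nat.zero_le _

lemma sum_range_getD (L : List ℕ) (j : ℕ) :
    ∑ i ∈ Finset.range j, L.getD i 0 = (L.take j).sum := by
  induction j with
  | zero => simp
  | succ j ih =>
    rw [Finset.sum_range_succ, ih, List.take_succ]
    rw [List.sum_append]
    congr 1
    rcases Nat.lt_or_ge j L.length with h | h
    · rw [List.getD_eq_getElem _ _ h, List.getElem?_eq_getElem h]
      simp
    · rw [List.getD_eq_default _ _ h, List.getElem?_eq_none h]
      simp

end Helpers

/-- If `λ > μ` in dominance order, `i` the least index with `λ_i > μ_i`, `j > i` the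
least index with equal partial sums, then increasing `μ_i` by one and decreasing `μ_j`
by one yields a partition `ν` of `n` with `λ ≥ ν > μ`. -/
theorem intermediate_partition (n : ℕ) (l m : Nat.Partition n)
    (hdom : Dominates l m) (hne : l ≠ m) (i j : ℕ)
    (hi1 : 1 ≤ i) (hi : part m i < part l i)
    (himin : ∀ k, 1 ≤ k → k < i → ¬ part m k < part l k)
    (hij : i < j) (hj : psum l j = psum m j)
    (hjmin : ∀ k, i < k → k < j → psum l k ≠ psum m k) :
    ∃ nu : Nat.Partition n,
      (∀ k, 1 ≤ k → part nu k =
        if k = i then part m k + 1 else if k = j then part m k - 1 else part m k) ∧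
      Dominates l nu ∧ SDom nu m := by
  classical
  set L := partsList m with hLdef
  have hLsorted : L.Pairwise (· ≥ ·) := partsList_sorted m
  have hLsum : L.sum = n := partsList_sum m
  have hpartm : ∀ k, part m k = L.getD (k-1) 0 := fun k => rfl
  have hpsumsucc : ∀ (p : Nat.Partition n) (k : ℕ),
      psum p (k+1) = psum p k + part p (k+1) := fun p k => Finset.sum_range_succ _ _
  -- strict partial-sum inequalities between i and j
  have hstrict : ∀ k, i ≤ k → k < j → psum m k < psum l k := by
    intro k hik hkj
    rcases eq_or_lt_of_le hik with h | h
    · obtain ⟨i', rfl⟩ : ∃ i', i = i' + 1 := ⟨i - 1, by omega⟩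
      subst h
      rw [hpsumsucc, hpsumsucc]
      exact Nat.add_lt_add_of_le_of_lt (hdom i') hi
    · exact lt_of_le_of_ne (hdom k) (fun he => hjmin k h hkj he.symm)
  have hjm1 : psum m (j-1) < psum l (j-1) := hstrict (j-1) (by omega) (by omega)
  have hstepl : psum l ((j-1)+1) = psum l (j-1) + part l ((j-1)+1) := hpsumsucc l (j-1)
  have hstepm : psum m ((j-1)+1) = psum m (j-1) + part m ((j-1)+1) := hpsumsucc m (j-1)
  have hjj : (j - 1) + 1 = j := by omega
  rw [hjj] at hstepl hstepm
  have hlj_lt : part l j < part m j := by omega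
  have hmj1 : 1 ≤ part m j := by omega
  -- part m (j+1) < part m j
  have hnext : part m (j+1) < part m j := by
    have h1 := hpsumsucc l j
    have h2 := hpsumsucc m j
    have h3 := hdom (j+1)
    have h4 : part l (j+1) ≤ part l j := part_le_part l (by omega) (by omega)
    omega
  -- part m (i-1) > part m i when i ≥ 2
  have hprev : 2 ≤ i → part m i + 1 ≤ part m (i-1) := by
    intro h2
    have a := himin (i-1) (by omega) (by omega)
    have b : part l i ≤ part l (i-1) := part_le_part l (by omega) (by omega)
    omega
  -- j ≤ L.length
  have hjlen : j ≤ L.length := by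
    by_contra h
    have h0 : L.getD (j-1) 0 = 0 := List.getD_eq_default _ _ (by omega)
    rw [hpartm j] at hmj1
    omega
  have hilen : i - 1 < L.length := by omega
  have hLget : ∀ k (hk : k < L.length), L[k] = part m (k+1) := by
    intro k hk
    rw [hpartm (k+1), Nat.add_sub_cancel, List.getD_eq_getElem _ _ hk]
  -- the modified list
  set L' := (L.set (i-1) (part m i + 1)).set (j-1) (part m j - 1) with hL'def
  have hlen' : L'.length = L.length := by simp [hL'def]
  have hget' : ∀ k (hk : k < L.length),
      L'[k]'(by omega) =
        if k = j - 1 then part m j - 1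
        else if k = i - 1 then part m i + 1 else L[k] := by
    intro k hk
    simp only [hL'def]
    rw [List.getElem_set, List.getElem_set]
    by_cases h1 : k = j - 1
    · rw [if_pos h1.symm, if_pos h1]
    · rw [if_neg (fun h => h1 h.symm), if_neg h1]
      by_cases h2 : k = i - 1
      · rw [if_pos h2.symm, if_pos h2]
      · rw [if_neg (fun h => h2 h.symm), if_neg h2]
  -- sortedness of L'
  have hij' : i - 1 < j - 1 := by omega
  have hsorted' : L'.Pairwise (· ≥ ·) := by
    rw [← List.isChain_iff_pairwise, List.isChain_iff_getElem]
    intro k hk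
    have hk1 : k + 1 < L.length := by omega
    have hkk : k < L.length := by omega
    rw [hget' k hkk, hget' (k+1) hk1]
    by_cases hkj : k = j - 1
    · rw [if_pos hkj, if_neg (by omega), if_neg (by omega)]
      have hv := hLget (k+1) hk1
      rw [show k + 1 + 1 = j + 1 by omega] at hv
      rw [hv]
      omega
    · rw [if_neg hkj]
      by_cases hkj1 : k + 1 = j - 1
      · rw [if_pos hkj1]
        by_cases hki : k = i - 1
        · rw [if_pos hki]
          have : part m j ≤ part m i := part_le_part m hi1 (by omega)
          omega
        · rw [if_neg hki]
          have hv := hLget k hkk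
          have : part m j ≤ part m (k+1) := part_le_part m (by omega) (by omega)
          rw [hv]
          omega
      · rw [if_neg hkj1]
        by_cases hki : k = i - 1
        · rw [if_pos hki, if_neg (by omega)]
          have hv := hLget (k+1) hk1
          rw [hv]
          have : part m (k+1+1) ≤ part m i := part_le_part m hi1 (by omega)
          omega
        · rw [if_neg hki]
          by_cases hki1 : k + 1 = i - 1
          · rw [if_pos hki1]
            have hv := hLget k hkk
            rw [hv]
            have h2 := hprev (by omega)
            rw [show i - 1 = (k+1) by omega] at h2
            omega
          · rw [if_neg hki1, hLget k hkk, hLget (k+1) hk1]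
            exact part_le_part m (by omega) (by omega)
  -- sum of L'
  have hsum' : L'.sum = n := by
    have e1 : L'.sum = ∑ k ∈ Finset.range L.length, L'.getD k 0 := by
      rw [sum_range_getD, List.take_of_length_le (by omega)]
    have e2 : L.sum = ∑ k ∈ Finset.range L.length, L.getD k 0 := by
      rw [sum_range_getD, List.take_of_length_le (le_refl _)]
    have key : ∀ k ∈ Finset.range L.length,
        L'.getD k 0 + (if k = j - 1 then 1 else 0)
          = L.getD k 0 + (if k = i - 1 then 1 else 0) := by
      intro k hk
      rw [Finset.mem_range] at hk
      rw [List.getD_eq_getElem _ _ (show k < L'.length by omega),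
        List.getD_eq_getElem _ _ hk, hget' k hk]
      by_cases h1 : k = j - 1
      · rw [if_pos h1, if_pos h1, if_neg (by omega)]
        have hv := hLget k hk
        rw [hv, show k + 1 = j by omega]
        omega
      · rw [if_neg h1, if_neg h1]
        by_cases h2 : k = i - 1
        · rw [if_pos h2, if_pos h2]
          have hv := hLget k hk
          rw [hv, show k + 1 = i by omega]
        · rw [if_neg h2, if_neg h2]
    have hsums := Finset.sum_congr rfl key
    rw [Finset.sum_add_distrib, Finset.sum_add_distrib,
      Finset.sum_ite_eq' _ (j-1) (fun _ => 1), Finset.sum_ite_eq' _ (i-1) (fun _ => 1),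
      if_pos (Finset.mem_range.mpr (by omega)),
      if_pos (Finset.mem_range.mpr (by omega))] at hsums
    omega
  -- truncation length
  set llen := if part m j = 1 then j - 1 else L.length with hllendef
  have hlenj : part m j = 1 → L.length = j := by
    intro h1
    by_contra h
    have hjlt : j < L.length := by omega
    have hv := hLget j hjlt
    have hpos := partsList_pos m (List.getElem_mem hjlt)
    omega
  have hllen_le : llen ≤ L.length := by
    rw [hllendef]; split <;> omega
  set L'' := L'.take llen with hL''def
  have hlen'' : L''.length = llen := by
    rw [hL''def, List.length_take]; omega
  have hgetD'' : ∀ k, L''.getD k 0 = L'.getD k 0 := by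
    intro k
    by_cases hk : k < llen
    · rw [List.getD_eq_getElem _ _ (show k < L''.length by omega),
        List.getD_eq_getElem _ _ (show k < L'.length by omega)]
      exact List.getElem_take
    · rw [List.getD_eq_default _ _ (by omega)]
      by_cases hA : part m j = 1
      · have hLj : L.length = j := hlenj hA
        rw [hllendef, if_pos hA] at hk
        rcases Nat.lt_or_ge k L'.length with h | h
        · have hkj : k = j - 1 := by omega
          rw [List.getD_eq_getElem _ _ h, hget' k (by omega), if_pos hkj]
          omega
        · rw [List.getD_eq_default _ _ h]
      · rw [hllendef, if_neg hA] at hk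
        rw [List.getD_eq_default _ _ (by omega)]
  have hsum'' : L''.sum = n := by
    by_cases hA : part m j = 1
    · have hLj : L.length = j := hlenj hA
      have hll : llen = j - 1 := by rw [hllendef, if_pos hA]
      have hdropsum : (L'.drop llen).sum = 0 := by
        rw [List.drop_eq_getElem_cons (show llen < L'.length by omega)]
        rw [List.drop_of_length_le (by omega)]
        rw [hget' llen (by omega), if_pos (by omega)]
        simp only [List.sum_cons, List.sum_nil]
        omega
      have := List.sum_take_add_sum_drop L' llen
      rw [← hL''def] at this
      omega
    · have hll : llen = L.length := by rw [hllendef, if_neg hA]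
      rw [hL''def, hll, List.take_of_length_le (by omega)]
      exact hsum'
  have hpos'' : ∀ {x : ℕ}, x ∈ (L'' : Multiset ℕ) → 0 < x := by
    intro x hx
    have hx' : x ∈ L'' := by exact_mod_cast hx
    obtain ⟨k, hk, rfl⟩ := List.mem_iff_getElem.mp hx'
    have hkl : k < llen := by omega
    have ht : L''[k] = L'[k]'(by omega) := List.getElem_take
    rw [ht, hget' k (by omega)]
    by_cases h1 : k = j - 1
    · rw [if_pos h1]
      have hA : part m j ≠ 1 := by
        intro hA
        rw [hllendef, if_pos hA] at hkl
        omega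
      omega
    · rw [if_neg h1]
      by_cases h2 : k = i - 1
      · rw [if_pos h2]; omega
      · rw [if_neg h2]
        exact partsList_pos m (List.getElem_mem (show k < L.length by omega))
  -- the new partition
  set nu : Nat.Partition n := ⟨(L'' : Multiset ℕ), hpos'', by rw [Multiset.sum_coe]; exact hsum''⟩
    with hnudef
  have hsorted'' : L''.Pairwise (· ≥ ·) :=
    List.Pairwise.sublist (List.take_sublist _ _) hsorted'
  have hplnu : partsList nu = L'' := by
    apply List.Perm.eq_of_pairwise' (partsList_sorted nu) hsorted''
    rw [← Multiset.coe_eq_coe, partsList_coe]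
  have hpart_nu : ∀ k, 1 ≤ k → part nu k =
      if k = i then part m k + 1 else if k = j then part m k - 1 else part m k := by
    intro k hk
    have hbase : part nu k = L'.getD (k-1) 0 := by
      rw [part, hplnu, hgetD'']
    by_cases hkl : k - 1 < L.length
    · rw [hbase, List.getD_eq_getElem _ _ (show k - 1 < L'.length by omega),
        hget' (k-1) hkl]
      by_cases h1 : k = j
      · rw [if_pos (by omega), if_neg (by omega), if_pos h1, h1]
      · rw [if_neg (by omega)]
        by_cases h2 : k = i
        · rw [if_pos (by omega), if_pos h2, h2]
        · rw [if_neg (by omega), if_neg h2, if_neg h1, hLget (k-1) hkl,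
            show k - 1 + 1 = k by omega]
    · have hki : k ≠ i := by omega
      have hkj : k ≠ j := by omega
      rw [if_neg hki, if_neg hkj, hbase,
        List.getD_eq_default _ _ (show L'.length ≤ k - 1 by omega),
        hpartm k, List.getD_eq_default _ _ (by omega)]
  -- partial sums of nu
  have hpsum_nu : ∀ k, psum nu k =
      if k < i then psum m k else if k < j then psum m k + 1 else psum m k := by
    intro k
    induction k with
    | zero =>
      rw [if_pos (show 0 < i by omega)]
      simp [psum]
    | succ k ih =>
      rw [hpsumsucc nu k, hpsumsucc m k, hpart_nu (k+1) (by omega), ih]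
      have ha : k + 1 ≠ j ∨ 1 ≤ part m (k+1) := by
        by_cases h : k + 1 = j
        · right; rw [h]; exact hmj1
        · left; exact h
      split_ifs <;> omega
  refine ⟨nu, hpart_nu, ?_, ?_, ?_⟩
  · intro k
    rw [hpsum_nu k]
    split_ifs with h1 h2
    · exact hdom k
    · exact hstrict k (by omega) h2
    · exact hdom k
  · intro k
    rw [hpsum_nu k]
    split_ifs <;> omega
  · intro he
    have hp := hpart_nu i hi1
    rw [he, if_pos rfl] at hp
    omega
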